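/- For any states ρ₁ and ρ₂ on bipartite systems and any real numbers K, K' > 0, one has F_Γ(ρ₁;K')·F_Γ(ρ₂;K/K') ≤ F_Γ(ρ₁ ⊗ ρ₂; K) ≤ F_Γ(ρ₁; K / Tr|ρ₂^Γ|), where the tensor product ρ₁ ⊗ ρ₂ is regarded as a state on the bipartite system grouping the two first factors against the two second factors. -/

import Mathlib

open Matrix Filter
open scoped ComplexOrder

noncomputable section

/-- Partial transpose on the second tensor factor:
`ptrans M ((i,j),(k,l)) = M ((i,l),(k,j))`. -/
def ptrans {ι κ : Type*} (M : Matrix (ι × κ) (ι × κ) ℂ) : Matrix (ι × κ) (ι × κ) ℂ :=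
  fun x y => M (x.1, y.2) (y.1, x.2)

/-- Fidelity of `K`-state p.p.t. distillation:
the supremum of `Tr(Fρ)` over Hermitian `F` with `0 ≤ F ≤ 1` and `-1/K ≤ F^Γ ≤ 1/K`. -/
def FGamma {ι κ : Type*} [Fintype ι] [Fintype κ] [DecidableEq ι] [DecidableEq κ]
    (ρ : Matrix (ι × κ) (ι × κ) ℂ) (K : ℝ) : ℝ :=
  sSup {x : ℝ | ∃ F : Matrix (ι × κ) (ι × κ) ℂ,
    F.PosSemidef ∧ (1 - F).PosSemidef ∧
    (((1 / K : ℝ) : ℂ) • 1 - ptrans F).PosSemidef ∧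
    (ptrans F + ((1 / K : ℝ) : ℂ) • 1).PosSemidef ∧
    x = ((F * ρ).trace).re}

/-- Trace of the positive part of a Hermitian matrix: `Tr(A₊) = ∑ᵢ max(λᵢ, 0)`. -/
def tracePos {n : Type*} [Fintype n] [DecidableEq n] (A : Matrix n n ℂ) : ℝ :=
  if h : A.IsHermitian then ∑ i, max (h.eigenvalues i) 0 else 0

/-- Trace norm of a Hermitian matrix: `Tr|A| = ∑ᵢ |λᵢ|`. -/
def traceAbs {n : Type*} [Fintype n] [DecidableEq n] (A : Matrix n n ℂ) : ℝ :=
  if h : A.IsHermitian then ∑ i, |h.eigenvalues i| else 0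

/-- Tensor product of two bipartite matrices, regrouped as a bipartite matrix
(first factors against second factors). -/
def tensorBip {ι₁ κ₁ ι₂ κ₂ : Type*}
    (ρ₁ : Matrix (ι₁ × κ₁) (ι₁ × κ₁) ℂ) (ρ₂ : Matrix (ι₂ × κ₂) (ι₂ × κ₂) ℂ) :
    Matrix ((ι₁ × ι₂) × (κ₁ × κ₂)) ((ι₁ × ι₂) × (κ₁ × κ₂)) ℂ :=
  fun x y => ρ₁ (x.1.1, x.2.1) (y.1.1, y.2.1) * ρ₂ (x.1.2, x.2.2) (y.1.2, y.2.2)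

set_option linter.unusedSectionVars false
set_option linter.unnecessarySeqFocus false
set_option linter.unreachableTactic false
set_option linter.unusedTactic false
set_option maxHeartbeats 1000000

def bipEquiv {ι₁ κ₁ ι₂ κ₂ : Type*} : ((ι₁ × κ₁) × (ι₂ × κ₂)) ≃ ((ι₁ × ι₂) × (κ₁ × κ₂)) where
  toFun z := ((z.1.1, z.2.1), (z.1.2, z.2.2))
  invFun z := ((z.1.1, z.2.1), (z.1.2, z.2.2))
  left_inv := by rintro ⟨⟨a, b⟩, ⟨c, d⟩⟩; rfl
  right_inv := by rintro ⟨⟨a, b⟩, ⟨c, d⟩⟩; rfl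

open scoped MatrixOrder in
lemma posSemidef_iff_eq_transpose_mul_self {n : Type*} [Fintype n] {A : Matrix n n ℂ} :
    A.PosSemidef ↔ ∃ B : Matrix n n ℂ, A = Bᴴ * B := by
  classical
  constructor
  · intro hA
    obtain ⟨B, hB⟩ := CStarAlgebra.nonneg_iff_eq_star_mul_self.mp hA.nonneg
    exact ⟨B, hB⟩
  · rintro ⟨B, rfl⟩
    exact posSemidef_conjTranspose_mul_self B

section Basic
variable {ι κ ι₁ κ₁ ι₂ κ₂ : Type*}

lemma ptrans_add (A B : Matrix (ι × κ) (ι × κ) ℂ) : ptrans (A + B) = ptrans A + ptrans B := rfl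

lemma ptrans_sub (A B : Matrix (ι × κ) (ι × κ) ℂ) : ptrans (A - B) = ptrans A - ptrans B := rfl

lemma ptrans_smul (c : ℂ) (A : Matrix (ι × κ) (ι × κ) ℂ) : ptrans (c • A) = c • ptrans A := rfl

lemma ptrans_one [DecidableEq ι] [DecidableEq κ] : ptrans (1 : Matrix (ι × κ) (ι × κ) ℂ) = 1 := by
  ext ⟨i, j⟩ ⟨k, l⟩
  simp only [ptrans, one_apply, Prod.mk.injEq, Prod.ext_iff]
  by_cases h1 : i = k <;> by_cases h2 : j = l <;> simp [h1, h2] <;> tauto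

lemma ptrans_isHermitian {M : Matrix (ι × κ) (ι × κ) ℂ} (hM : M.IsHermitian) :
    (ptrans M).IsHermitian := by
  ext ⟨i, j⟩ ⟨k, l⟩
  have := congrFun (congrFun hM ((i, l))) ((k, j))
  simpa [ptrans, conjTranspose_apply] using this

lemma trace_ptrans [Fintype ι] [Fintype κ] (M : Matrix (ι × κ) (ι × κ) ℂ) :
    (ptrans M).trace = M.trace := rfl

lemma tensorBip_conjTranspose (A : Matrix (ι₁ × κ₁) (ι₁ × κ₁) ℂ) (B : Matrix (ι₂ × κ₂) (ι₂ × κ₂) ℂ) :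
    (tensorBip A B)ᴴ = tensorBip Aᴴ Bᴴ := by
  ext x y
  simp [tensorBip, conjTranspose_apply]

lemma tensorBip_mul [Fintype ι₁] [Fintype κ₁] [Fintype ι₂] [Fintype κ₂]
    (A C : Matrix (ι₁ × κ₁) (ι₁ × κ₁) ℂ) (B D : Matrix (ι₂ × κ₂) (ι₂ × κ₂) ℂ) :
    tensorBip A B * tensorBip C D = tensorBip (A * C) (B * D) := by
  ext x y
  simp only [mul_apply, tensorBip]
  rw [Finset.sum_mul_sum, ← Fintype.sum_prod_type']
  exact Fintype.sum_equiv bipEquiv.symm _ _ (by rintro ⟨⟨k, r⟩, ⟨l, s⟩⟩; simp [bipEquiv]; ring)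

lemma tensorBip_trace [Fintype ι₁] [Fintype κ₁] [Fintype ι₂] [Fintype κ₂]
    (A : Matrix (ι₁ × κ₁) (ι₁ × κ₁) ℂ) (B : Matrix (ι₂ × κ₂) (ι₂ × κ₂) ℂ) :
    (tensorBip A B).trace = A.trace * B.trace := by
  simp only [trace, diag, tensorBip]
  rw [Finset.sum_mul_sum, ← Fintype.sum_prod_type']
  exact Fintype.sum_equiv bipEquiv.symm _ _ (by rintro ⟨⟨k, r⟩, ⟨l, s⟩⟩; simp [bipEquiv])

lemma tensorBip_one [DecidableEq ι₁] [DecidableEq κ₁] [DecidableEq ι₂] [DecidableEq κ₂] :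
    tensorBip (1 : Matrix (ι₁ × κ₁) (ι₁ × κ₁) ℂ) (1 : Matrix (ι₂ × κ₂) (ι₂ × κ₂) ℂ) = 1 := by
  ext ⟨⟨i, p⟩, ⟨j, q⟩⟩ ⟨⟨k, r⟩, ⟨l, s⟩⟩
  simp only [tensorBip, one_apply, Prod.mk.injEq, Prod.ext_iff]
  by_cases h1 : i = k <;> by_cases h2 : j = l <;> by_cases h3 : p = r <;> by_cases h4 : q = s <;>
    simp [h1, h2, h3, h4] <;> tauto

lemma tensorBip_add_left (A A' : Matrix (ι₁ × κ₁) (ι₁ × κ₁) ℂ) (B : Matrix (ι₂ × κ₂) (ι₂ × κ₂) ℂ) :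
    tensorBip (A + A') B = tensorBip A B + tensorBip A' B := by
  ext x y; simp [tensorBip]; ring

lemma tensorBip_add_right (A : Matrix (ι₁ × κ₁) (ι₁ × κ₁) ℂ) (B B' : Matrix (ι₂ × κ₂) (ι₂ × κ₂) ℂ) :
    tensorBip A (B + B') = tensorBip A B + tensorBip A B' := by
  ext x y; simp [tensorBip]; ring

lemma tensorBip_smul_left (c : ℂ) (A : Matrix (ι₁ × κ₁) (ι₁ × κ₁) ℂ)
    (B : Matrix (ι₂ × κ₂) (ι₂ × κ₂) ℂ) : tensorBip (c • A) B = c • tensorBip A B := by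
  ext x y; simp [tensorBip]; ring

lemma tensorBip_smul_right (c : ℂ) (A : Matrix (ι₁ × κ₁) (ι₁ × κ₁) ℂ)
    (B : Matrix (ι₂ × κ₂) (ι₂ × κ₂) ℂ) : tensorBip A (c • B) = c • tensorBip A B := by
  ext x y; simp [tensorBip]; ring

lemma ptrans_tensorBip (A : Matrix (ι₁ × κ₁) (ι₁ × κ₁) ℂ) (B : Matrix (ι₂ × κ₂) (ι₂ × κ₂) ℂ) :
    ptrans (tensorBip A B) = tensorBip (ptrans A) (ptrans B) := rfl

lemma tensorBip_posSemidef [Fintype ι₁] [Fintype κ₁] [Fintype ι₂] [Fintype κ₂]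
    {A : Matrix (ι₁ × κ₁) (ι₁ × κ₁) ℂ} {B : Matrix (ι₂ × κ₂) (ι₂ × κ₂) ℂ}
    (hA : A.PosSemidef) (hB : B.PosSemidef) : (tensorBip A B).PosSemidef := by
  obtain ⟨P, rfl⟩ := posSemidef_iff_eq_transpose_mul_self.mp hA
  obtain ⟨Q, rfl⟩ := posSemidef_iff_eq_transpose_mul_self.mp hB
  rw [tensorBip_mul (A := Pᴴ) (C := P) (B := Qᴴ) (D := Q) |>.symm, ← tensorBip_conjTranspose]
  exact posSemidef_conjTranspose_mul_self _

end Basic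

section Contr
variable {ι₁ κ₁ ι₂ κ₂ : Type*} [Fintype ι₁] [Fintype κ₁] [Fintype ι₂] [Fintype κ₂]

def contr (σ : Matrix (ι₂ × κ₂) (ι₂ × κ₂) ℂ)
    (F : Matrix ((ι₁ × ι₂) × (κ₁ × κ₂)) ((ι₁ × ι₂) × (κ₁ × κ₂)) ℂ) :
    Matrix (ι₁ × κ₁) (ι₁ × κ₁) ℂ :=
  fun x y => ∑ z : (ι₂ × κ₂) × (ι₂ × κ₂),
    F ((x.1, z.1.1), (x.2, z.1.2)) ((y.1, z.2.1), (y.2, z.2.2)) * σ z.2 z.1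

lemma contr_sub_left (σ τ : Matrix (ι₂ × κ₂) (ι₂ × κ₂) ℂ)
    (F : Matrix ((ι₁ × ι₂) × (κ₁ × κ₂)) ((ι₁ × ι₂) × (κ₁ × κ₂)) ℂ) :
    contr (ι₁ := ι₁) (κ₁ := κ₁) (σ - τ) F = contr σ F - contr τ F := by
  ext x y
  simp [contr, mul_sub, Finset.sum_sub_distrib]

lemma contr_sub_right (σ : Matrix (ι₂ × κ₂) (ι₂ × κ₂) ℂ)
    (F G : Matrix ((ι₁ × ι₂) × (κ₁ × κ₂)) ((ι₁ × ι₂) × (κ₁ × κ₂)) ℂ) :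
    contr (ι₁ := ι₁) (κ₁ := κ₁) σ (F - G) = contr σ F - contr σ G := by
  ext x y
  simp [contr, sub_mul, Finset.sum_sub_distrib]

lemma contr_add_right (σ : Matrix (ι₂ × κ₂) (ι₂ × κ₂) ℂ)
    (F G : Matrix ((ι₁ × ι₂) × (κ₁ × κ₂)) ((ι₁ × ι₂) × (κ₁ × κ₂)) ℂ) :
    contr (ι₁ := ι₁) (κ₁ := κ₁) σ (F + G) = contr σ F + contr σ G := by
  ext x y
  simp [contr, add_mul, Finset.sum_add_distrib]

lemma contr_smul_right (σ : Matrix (ι₂ × κ₂) (ι₂ × κ₂) ℂ) (c : ℂ)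
    (F : Matrix ((ι₁ × ι₂) × (κ₁ × κ₂)) ((ι₁ × ι₂) × (κ₁ × κ₂)) ℂ) :
    contr (ι₁ := ι₁) (κ₁ := κ₁) σ (c • F) = c • contr σ F := by
  ext x y
  simp only [contr, Matrix.smul_apply, smul_eq_mul, Finset.mul_sum]
  exact Finset.sum_congr rfl fun z _ => by ring

lemma contr_one [DecidableEq ι₁] [DecidableEq κ₁] [DecidableEq ι₂] [DecidableEq κ₂]
    (σ : Matrix (ι₂ × κ₂) (ι₂ × κ₂) ℂ) :
    contr (ι₁ := ι₁) (κ₁ := κ₁) σ 1 = σ.trace • 1 := by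
  ext x y
  rcases eq_or_ne x y with rfl | hxy
  · have key : ∀ z : (ι₂ × κ₂) × (ι₂ × κ₂),
        (1 : Matrix ((ι₁ × ι₂) × (κ₁ × κ₂)) ((ι₁ × ι₂) × (κ₁ × κ₂)) ℂ)
          ((x.1, z.1.1), (x.2, z.1.2)) ((x.1, z.2.1), (x.2, z.2.2)) * σ z.2 z.1
          = if z.1 = z.2 then σ z.2 z.1 else 0 := by
      intro z
      by_cases h : z.1 = z.2
      · simp [one_apply, h, Prod.ext_iff]
      · rw [one_apply_ne, zero_mul, if_neg h]
        simp only [Ne, Prod.ext_iff, not_and] at h ⊢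
        tauto
    show (∑ z : (ι₂ × κ₂) × (ι₂ × κ₂), _) = _
    rw [Finset.sum_congr rfl fun z _ => key z]
    simp [Fintype.sum_prod_type, trace, diag, Finset.sum_ite_eq]
  · have hz : ∀ z : (ι₂ × κ₂) × (ι₂ × κ₂),
        (((x.1, z.1.1), (x.2, z.1.2)) : (ι₁ × ι₂) × (κ₁ × κ₂)) ≠ ((y.1, z.2.1), (y.2, z.2.2)) := by
      intro z h
      rw [Prod.ext_iff, Prod.ext_iff, Prod.ext_iff] at h
      exact hxy (Prod.ext h.1.1 h.2.1)
    have h0 : contr (ι₁ := ι₁) (κ₁ := κ₁) σ 1 x y = 0 :=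
      Finset.sum_eq_zero fun z _ => by rw [one_apply_ne (hz z), zero_mul]
    rw [h0, Matrix.smul_apply, one_apply_ne hxy, smul_zero]

lemma trace_contr_mul (σ : Matrix (ι₂ × κ₂) (ι₂ × κ₂) ℂ)
    (F : Matrix ((ι₁ × ι₂) × (κ₁ × κ₂)) ((ι₁ × ι₂) × (κ₁ × κ₂)) ℂ)
    (τ : Matrix (ι₁ × κ₁) (ι₁ × κ₁) ℂ) :
    (contr σ F * τ).trace = (F * tensorBip τ σ).trace := by
  simp only [trace, diag, mul_apply, contr, tensorBip, Finset.sum_mul, Finset.mul_sum]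
  conv_lhs => rw [← Fintype.sum_prod_type', ← Fintype.sum_prod_type']
  conv_rhs => rw [← Fintype.sum_prod_type']
  refine Fintype.sum_equiv
    ((Equiv.prodProdProdComm _ _ _ _).trans (bipEquiv.prodCongr bipEquiv)) _ _ ?_
  rintro q
  obtain ⟨⟨⟨x1, x2⟩, ⟨y1, y2⟩⟩, ⟨⟨p, q'⟩, ⟨r, s⟩⟩⟩ := q
  simp [bipEquiv, Equiv.prodProdProdComm]
  ring






variable {n : Type*} [Fintype n] [DecidableEq n]

lemma trace_psd_nonneg {M : Matrix n n ℂ} (hM : M.PosSemidef) : 0 ≤ M.trace := by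
  rw [trace]
  refine Finset.sum_nonneg fun i _ => ?_
  have := hM.dotProduct_mulVec_nonneg (Pi.single i 1)
  simpa [mulVec, dotProduct, Pi.single_apply] using this

lemma trace_mul_psd_nonneg {A B : Matrix n n ℂ} (hA : A.PosSemidef) (hB : B.PosSemidef) :
    0 ≤ (A * B).trace := by
  obtain ⟨C, rfl⟩ := posSemidef_iff_eq_transpose_mul_self.mp hB
  have h1 : (A * (Cᴴ * C)).trace = (C * A * Cᴴ).trace := by
    rw [← Matrix.mul_assoc, trace_mul_cycle]
  rw [h1]
  exact trace_psd_nonneg (hA.mul_mul_conjTranspose_same C)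

lemma trace_mul_vecMulVec (M : Matrix n n ℂ) (v : n → ℂ) :
    (M * vecMulVec v (star v)).trace = star v ⬝ᵥ (M *ᵥ v) := by
  simp only [trace, diag, mul_apply, vecMulVec_apply, dotProduct, mulVec, Pi.star_apply]
  refine Finset.sum_congr rfl fun i _ => ?_
  rw [Finset.mul_sum]
  refine Finset.sum_congr rfl fun j _ => ?_
  ring

lemma vecMulVec_posSemidef (v : n → ℂ) : (vecMulVec v (star v)).PosSemidef := by
  refine posSemidef_iff_dotProduct_mulVec.mpr ⟨?_, ?_⟩
  · ext i j
    simp [vecMulVec_apply, conjTranspose_apply, mul_comm]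
  · intro x
    have : star x ⬝ᵥ (vecMulVec v (star v) *ᵥ x) = star (star v ⬝ᵥ x) * (star v ⬝ᵥ x) := by
      simp only [dotProduct, mulVec, vecMulVec_apply, Pi.star_apply, star_sum, star_mul',
        star_star, Finset.sum_mul, Finset.mul_sum]
      rw [Finset.sum_comm]
      refine Finset.sum_congr rfl fun i _ => ?_
      refine Finset.sum_congr rfl fun j _ => ?_
      ring
    rw [this]
    exact mul_star_self_nonneg _ |>.trans_eq (by rw [mul_comm])




section Contr2
variable {ι₁ κ₁ ι₂ κ₂ : Type*} [Fintype ι₁] [Fintype κ₁] [Fintype ι₂] [Fintype κ₂]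
  [DecidableEq ι₁] [DecidableEq κ₁] [DecidableEq ι₂] [DecidableEq κ₂]

lemma contr_isHermitian {σ : Matrix (ι₂ × κ₂) (ι₂ × κ₂) ℂ}
    {F : Matrix ((ι₁ × ι₂) × (κ₁ × κ₂)) ((ι₁ × ι₂) × (κ₁ × κ₂)) ℂ}
    (hσ : σ.IsHermitian) (hF : F.IsHermitian) : (contr σ F).IsHermitian := by
  ext x y
  rw [conjTranspose_apply]
  show star (∑ z : (ι₂ × κ₂) × (ι₂ × κ₂), _) = (∑ z : (ι₂ × κ₂) × (ι₂ × κ₂), _)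
  rw [star_sum]
  refine Fintype.sum_equiv (Equiv.prodComm _ _) _ _ ?_
  rintro ⟨z1, z2⟩
  simp only [star_mul', Equiv.prodComm_apply, Prod.swap_prod_mk, Prod.fst, Prod.snd]
  rw [← conjTranspose_apply, hF, ← conjTranspose_apply, hσ]

lemma contr_posSemidef {σ : Matrix (ι₂ × κ₂) (ι₂ × κ₂) ℂ}
    {F : Matrix ((ι₁ × ι₂) × (κ₁ × κ₂)) ((ι₁ × ι₂) × (κ₁ × κ₂)) ℂ}
    (hσ : σ.PosSemidef) (hF : F.PosSemidef) : (contr σ F).PosSemidef := by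
  refine posSemidef_iff_dotProduct_mulVec.mpr ⟨contr_isHermitian hσ.1 hF.1, fun v => ?_⟩
  rw [← trace_mul_vecMulVec, trace_contr_mul]
  exact trace_mul_psd_nonneg hF (tensorBip_posSemidef (vecMulVec_posSemidef v) hσ)

lemma ptrans_contr (σ : Matrix (ι₂ × κ₂) (ι₂ × κ₂) ℂ)
    (F : Matrix ((ι₁ × ι₂) × (κ₁ × κ₂)) ((ι₁ × ι₂) × (κ₁ × κ₂)) ℂ) :
    ptrans (contr σ F) = contr (ptrans σ) (ptrans F) := by
  ext x y
  show (∑ z : (ι₂ × κ₂) × (ι₂ × κ₂), _) = (∑ z : (ι₂ × κ₂) × (ι₂ × κ₂), _)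
  refine Fintype.sum_equiv
    ⟨fun z => ((z.1.1, z.2.2), (z.2.1, z.1.2)),
     fun z => ((z.1.1, z.2.2), (z.2.1, z.1.2)),
     by rintro ⟨⟨p, q⟩, ⟨r, s⟩⟩; rfl, by rintro ⟨⟨p, q⟩, ⟨r, s⟩⟩; rfl⟩ _ _ ?_
  rintro ⟨⟨p, q⟩, ⟨r, s⟩⟩
  rfl

end Contr2

section Parts
variable {n : Type*} [Fintype n] [DecidableEq n]

lemma trace_conj_diag (U : Matrix n n ℂ) (hU : U ∈ Matrix.unitaryGroup n ℂ) (d : n → ℂ) :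
    (U * diagonal d * star U).trace = ∑ i, d i := by
  rw [trace_mul_cycle]
  rw [(Matrix.mem_unitaryGroup_iff'.mp hU : star U * U = 1), Matrix.one_mul, trace_diagonal]

lemma isHermitian_trace_eq {A : Matrix n n ℂ} (hA : A.IsHermitian) :
    A.trace = ((∑ i, hA.eigenvalues i : ℝ) : ℂ) := by
  conv_lhs => rw [hA.spectral_theorem, Unitary.conjStarAlgAut_apply]
  rw [trace_conj_diag _ (hA.eigenvectorUnitary).2]
  push_cast
  rfl

lemma exists_pos_parts {A : Matrix n n ℂ} (hA : A.IsHermitian) :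
    ∃ P N : Matrix n n ℂ, P.PosSemidef ∧ N.PosSemidef ∧ A = P - N ∧
      ∃ p q : ℝ, 0 ≤ p ∧ 0 ≤ q ∧ P.trace = (p : ℂ) ∧ N.trace = (q : ℂ) ∧ p + q = traceAbs A := by
  set U : Matrix n n ℂ := (hA.eigenvectorUnitary : Matrix n n ℂ) with hUdef
  have hU := (hA.eigenvectorUnitary).2
  set dp : n → ℂ := fun i => ((max (hA.eigenvalues i) 0 : ℝ) : ℂ) with hdp
  set dn : n → ℂ := fun i => ((max (-hA.eigenvalues i) 0 : ℝ) : ℂ) with hdn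
  refine ⟨U * diagonal dp * star U, U * diagonal dn * star U, ?_, ?_, ?_, ?_⟩
  · exact (PosSemidef.diagonal fun i => by
      exact Complex.zero_le_real.mpr (le_max_right (hA.eigenvalues i) 0)
      ).mul_mul_conjTranspose_same U
  · exact (PosSemidef.diagonal fun i => by
      exact Complex.zero_le_real.mpr (le_max_right (-hA.eigenvalues i) 0)
      ).mul_mul_conjTranspose_same U
  · rw [← Matrix.sub_mul, ← Matrix.mul_sub, diagonal_sub]
    have : (fun i => dp i - dn i) = (RCLike.ofReal ∘ hA.eigenvalues : n → ℂ) := by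
      funext i
      simp only [hdp, hdn]
      rw [← Complex.ofReal_sub, max_zero_sub_max_neg_zero_eq_self]
      rfl
    rw [this]
    conv_lhs => rw [hA.spectral_theorem, Unitary.conjStarAlgAut_apply]
  · refine ⟨∑ i, max (hA.eigenvalues i) 0, ∑ i, max (-hA.eigenvalues i) 0,
      Finset.sum_nonneg fun i _ => le_max_right _ _,
      Finset.sum_nonneg fun i _ => le_max_right _ _, ?_, ?_, ?_⟩
    · rw [trace_conj_diag _ hU]; push_cast; rfl
    · rw [trace_conj_diag _ hU]; push_cast; rfl
    · rw [traceAbs, dif_pos hA, ← Finset.sum_add_distrib]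
      exact Finset.sum_congr rfl fun i _ => by rw [max_zero_add_max_neg_zero_eq_abs_self]
end Parts


section Smul
variable {n : Type*} [Fintype n]

lemma posSemidef_ofReal_smul {c : ℝ} (hc : 0 ≤ c) {M : Matrix n n ℂ} (hM : M.PosSemidef) :
    (((c : ℂ)) • M).PosSemidef := by
  refine posSemidef_iff_dotProduct_mulVec.mpr ⟨?_, ?_⟩
  · rw [IsHermitian, conjTranspose_smul, hM.1]
    congr 1
    simp [Complex.conj_ofReal]
  · intro x
    rw [smul_mulVec, dotProduct_smul, smul_eq_mul]
    exact mul_nonneg (Complex.zero_le_real.mpr hc) (hM.dotProduct_mulVec_nonneg x)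

end Smul

lemma csSup_mul_csSup_le {S₁ S₂ S : Set ℝ} (h₁ : S₁.Nonempty) (h₂ : S₂.Nonempty)
    (b₁ : BddAbove S₁) (b₂ : BddAbove S₂) (hb : BddAbove S) (hS0 : 0 ∈ S)
    (hpos₁ : ∀ x ∈ S₁, 0 ≤ x) (hpos₂ : ∀ y ∈ S₂, 0 ≤ y)
    (h : ∀ x ∈ S₁, ∀ y ∈ S₂, x * y ≤ sSup S) :
    sSup S₁ * sSup S₂ ≤ sSup S := by
  have hS : (0 : ℝ) ≤ sSup S := le_csSup hb hS0
  rcases le_or_gt (sSup S₂) 0 with hz | hz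
  · have hs1 : 0 ≤ sSup S₁ := by
      obtain ⟨x, hx⟩ := h₁
      exact le_trans (hpos₁ x hx) (le_csSup b₁ hx)
    exact le_trans (mul_nonpos_of_nonneg_of_nonpos hs1 hz) hS
  · rw [← le_div_iff₀ hz]
    refine csSup_le h₁ fun x hx => ?_
    rw [le_div_iff₀ hz]
    rcases (hpos₁ x hx).eq_or_lt with rfl | hx'
    · simpa using hS
    · have : sSup S₂ ≤ sSup S / x := csSup_le h₂ fun y hy => by
        rw [le_div_iff₀ hx']
        rw [mul_comm]
        exact h x hx y hy
      calc x * sSup S₂ ≤ x * (sSup S / x) := by nlinarith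
        _ = sSup S := by field_simp


section MoreBip
variable {ι₁ κ₁ ι₂ κ₂ : Type*}

lemma tensorBip_sub_left (A A' : Matrix (ι₁ × κ₁) (ι₁ × κ₁) ℂ) (B : Matrix (ι₂ × κ₂) (ι₂ × κ₂) ℂ) :
    tensorBip (A - A') B = tensorBip A B - tensorBip A' B := by
  ext x y; simp [tensorBip]; ring

lemma tensorBip_sub_right (A : Matrix (ι₁ × κ₁) (ι₁ × κ₁) ℂ) (B B' : Matrix (ι₂ × κ₂) (ι₂ × κ₂) ℂ) :
    tensorBip A (B - B') = tensorBip A B - tensorBip A B' := by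
  ext x y; simp [tensorBip]; ring

end MoreBip

section Feas
variable {ι κ : Type*} [Fintype ι] [Fintype κ] [DecidableEq ι] [DecidableEq κ]

def feas (ρ : Matrix (ι × κ) (ι × κ) ℂ) (K : ℝ) : Set ℝ :=
  {x : ℝ | ∃ F : Matrix (ι × κ) (ι × κ) ℂ,
    F.PosSemidef ∧ (1 - F).PosSemidef ∧
    (((1 / K : ℝ) : ℂ) • 1 - ptrans F).PosSemidef ∧
    (ptrans F + ((1 / K : ℝ) : ℂ) • 1).PosSemidef ∧
    x = ((F * ρ).trace).re}

lemma FGamma_eq_sSup_feas (ρ : Matrix (ι × κ) (ι × κ) ℂ) (K : ℝ) :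
    FGamma ρ K = sSup (feas ρ K) := rfl

lemma zero_mem_feas (ρ : Matrix (ι × κ) (ι × κ) ℂ) {K : ℝ} (hK : 0 < K) :
    (0 : ℝ) ∈ feas ρ K := by
  refine ⟨0, PosSemidef.zero, ?_, ?_, ?_, by simp⟩
  · rw [sub_zero]; exact PosSemidef.one
  · show (((1 / K : ℝ) : ℂ) • 1 - (0 : Matrix (ι × κ) (ι × κ) ℂ)).PosSemidef
    rw [sub_zero]
    exact posSemidef_ofReal_smul (by positivity) PosSemidef.one
  · show ((0 : Matrix (ι × κ) (ι × κ) ℂ) + ((1 / K : ℝ) : ℂ) • 1).PosSemidef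
    rw [zero_add]
    exact posSemidef_ofReal_smul (by positivity) PosSemidef.one

lemma feas_nonneg {ρ : Matrix (ι × κ) (ι × κ) ℂ} (hρ : ρ.PosSemidef) {K : ℝ} :
    ∀ x ∈ feas ρ K, 0 ≤ x := by
  rintro x ⟨F, hF, -, -, -, rfl⟩
  exact (Complex.nonneg_iff.mp (trace_mul_psd_nonneg hF hρ)).1

lemma feas_le_one {ρ : Matrix (ι × κ) (ι × κ) ℂ} (hρ : ρ.PosSemidef) (htr : ρ.trace = 1)
    {K : ℝ} : ∀ x ∈ feas ρ K, x ≤ 1 := by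
  rintro x ⟨F, hF, h1F, -, -, rfl⟩
  have h0 : 0 ≤ (((1 : Matrix (ι × κ) (ι × κ) ℂ) - F) * ρ).trace :=
    trace_mul_psd_nonneg h1F hρ
  have heq : (((1 : Matrix (ι × κ) (ι × κ) ℂ) - F) * ρ).trace = 1 - (F * ρ).trace := by
    rw [Matrix.sub_mul, Matrix.one_mul, trace_sub, htr]
  rw [heq] at h0
  have := (Complex.nonneg_iff.mp h0).1
  simp only [Complex.sub_re, Complex.one_re] at this
  linarith

lemma bddAbove_feas {ρ : Matrix (ι × κ) (ι × κ) ℂ} (hρ : ρ.PosSemidef) (htr : ρ.trace = 1)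
    {K : ℝ} : BddAbove (feas ρ K) :=
  ⟨1, fun _ hx => feas_le_one hρ htr _ hx⟩

end Feas

/-- Tensor product bounds:
`F_Γ(ρ₁;K') F_Γ(ρ₂;K/K') ≤ F_Γ(ρ₁⊗ρ₂;K) ≤ F_Γ(ρ₁; K/Tr|ρ₂^Γ|)`. -/
theorem FGamma_tensor_bounds {a b c e : ℕ}
    (ρ₁ : Matrix (Fin a × Fin b) (Fin a × Fin b) ℂ)
    (ρ₂ : Matrix (Fin c × Fin e) (Fin c × Fin e) ℂ)
    (hρ₁ : ρ₁.PosSemidef) (hρ₁tr : ρ₁.trace = 1)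
    (hρ₂ : ρ₂.PosSemidef) (hρ₂tr : ρ₂.trace = 1)
    (K K' : ℝ) (hK : 0 < K) (hK' : 0 < K') :
    FGamma ρ₁ K' * FGamma ρ₂ (K / K') ≤ FGamma (tensorBip ρ₁ ρ₂) K ∧
      FGamma (tensorBip ρ₁ ρ₂) K ≤ FGamma ρ₁ (K / traceAbs (ptrans ρ₂)) := by
  have htt : (tensorBip ρ₁ ρ₂).PosSemidef := tensorBip_posSemidef hρ₁ hρ₂
  have httr : (tensorBip ρ₁ ρ₂).trace = 1 := by
    rw [tensorBip_trace, hρ₁tr, hρ₂tr, one_mul]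
  have hKK' : 0 < K / K' := div_pos hK hK'
  constructor
  · -- lower bound
    rw [FGamma_eq_sSup_feas, FGamma_eq_sSup_feas, FGamma_eq_sSup_feas]
    refine csSup_mul_csSup_le ⟨0, zero_mem_feas _ hK'⟩ ⟨0, zero_mem_feas _ hKK'⟩
      (bddAbove_feas hρ₁ hρ₁tr) (bddAbove_feas hρ₂ hρ₂tr) (bddAbove_feas htt httr)
      (zero_mem_feas _ hK) (feas_nonneg hρ₁) (feas_nonneg hρ₂) ?_
    rintro x ⟨F₁, hF₁, h1F₁, h3F₁, h4F₁, rfl⟩ y ⟨F₂, hF₂, h1F₂, h3F₂, h4F₂, rfl⟩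
    refine le_csSup (bddAbove_feas htt httr) ?_
    have hαβ : ((1 / K : ℝ) : ℂ) = ((1 / K' : ℝ) : ℂ) * ((1 / (K / K') : ℝ) : ℂ) := by
      push_cast
      field_simp
    refine ⟨tensorBip F₁ F₂, tensorBip_posSemidef hF₁ hF₂, ?_, ?_, ?_, ?_⟩
    · have key : (1 : Matrix _ _ ℂ) - tensorBip F₁ F₂
          = tensorBip (1 - F₁) F₂ + tensorBip 1 (1 - F₂) := by
        rw [tensorBip_sub_left, tensorBip_sub_right, tensorBip_one]
        abel
      rw [key]
      exact (tensorBip_posSemidef h1F₁ hF₂).add (tensorBip_posSemidef PosSemidef.one h1F₂)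
    · have key : ((1 / K : ℝ) : ℂ) • (1 : Matrix _ _ ℂ) - ptrans (tensorBip F₁ F₂)
          = (((2 : ℝ)⁻¹ : ℝ) : ℂ) •
            (tensorBip (((1 / K' : ℝ) : ℂ) • 1 - ptrans F₁)
                (ptrans F₂ + ((1 / (K / K') : ℝ) : ℂ) • 1)
              + tensorBip (ptrans F₁ + ((1 / K' : ℝ) : ℂ) • 1)
                (((1 / (K / K') : ℝ) : ℂ) • 1 - ptrans F₂)) := by
        rw [ptrans_tensorBip, hαβ]
        simp only [tensorBip_sub_left, tensorBip_sub_right, tensorBip_add_left,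
          tensorBip_add_right, tensorBip_smul_left, tensorBip_smul_right, tensorBip_one]
        push_cast
        module
      rw [key]
      exact posSemidef_ofReal_smul (by norm_num)
        ((tensorBip_posSemidef h3F₁ h4F₂).add (tensorBip_posSemidef h4F₁ h3F₂))
    · have key : ptrans (tensorBip F₁ F₂) + ((1 / K : ℝ) : ℂ) • (1 : Matrix _ _ ℂ)
          = (((2 : ℝ)⁻¹ : ℝ) : ℂ) •
            (tensorBip (ptrans F₁ + ((1 / K' : ℝ) : ℂ) • 1)
                (ptrans F₂ + ((1 / (K / K') : ℝ) : ℂ) • 1)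
              + tensorBip (((1 / K' : ℝ) : ℂ) • 1 - ptrans F₁)
                (((1 / (K / K') : ℝ) : ℂ) • 1 - ptrans F₂)) := by
        rw [ptrans_tensorBip, hαβ]
        simp only [tensorBip_sub_left, tensorBip_sub_right, tensorBip_add_left,
          tensorBip_add_right, tensorBip_smul_left, tensorBip_smul_right, tensorBip_one]
        push_cast
        module
      rw [key]
      exact posSemidef_ofReal_smul (by norm_num)
        ((tensorBip_posSemidef h4F₁ h4F₂).add (tensorBip_posSemidef h3F₁ h3F₂))
    · rw [tensorBip_mul, tensorBip_trace]
      have z₁ := Complex.nonneg_iff.mp (trace_mul_psd_nonneg hF₁ hρ₁)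
      have z₂ := Complex.nonneg_iff.mp (trace_mul_psd_nonneg hF₂ hρ₂)
      rw [Complex.mul_re, ← z₁.2, ← z₂.2]
      ring
  · -- upper bound
    have hherm : (ptrans ρ₂).IsHermitian := ptrans_isHermitian hρ₂.1
    set Nv := traceAbs (ptrans ρ₂) with hNvdef
    have hNv : 1 ≤ Nv := by
      have htr2 : (ptrans ρ₂).trace = 1 := by rw [trace_ptrans, hρ₂tr]
      have hsum : (∑ i, hherm.eigenvalues i : ℝ) = 1 := by
        have := isHermitian_trace_eq hherm
        rw [htr2] at this
        exact_mod_cast this.symm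
      rw [hNvdef, traceAbs, dif_pos hherm, ← hsum]
      exact Finset.sum_le_sum fun i _ => le_abs_self _
    have hNv0 : Nv ≠ 0 := by linarith
    rw [FGamma_eq_sSup_feas, FGamma_eq_sSup_feas]
    refine csSup_le_csSup (bddAbove_feas hρ₁ hρ₁tr) ⟨0, zero_mem_feas _ hK⟩ ?_
    rintro x ⟨F, hF, h1F, h3F, h4F, rfl⟩
    obtain ⟨P, Nm, hP, hNm, hdecomp, p, q, hp, hq, hPtr, hNtr, hpq⟩ := exists_pos_parts hherm
    have hc₀ : ((1 / (K / Nv) : ℝ) : ℂ) = ((1 / K : ℝ) : ℂ) * (p : ℂ) + ((1 / K : ℝ) : ℂ) * (q : ℂ) := by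
      rw [← Complex.ofReal_mul, ← Complex.ofReal_mul, ← Complex.ofReal_add]
      congr 1
      have hNvpq : Nv = p + q := by rw [hNvdef, ← hpq]
      have hpq0 : p + q ≠ 0 := by rw [← hNvpq]; exact hNv0
      rw [hNvpq]
      field_simp
    refine ⟨contr ρ₂ F, contr_posSemidef hρ₂ hF, ?_, ?_, ?_, ?_⟩
    · have key : (1 : Matrix _ _ ℂ) - contr ρ₂ F = contr ρ₂ (1 - F) := by
        rw [contr_sub_right, contr_one, hρ₂tr, one_smul]
      rw [key]
      exact contr_posSemidef hρ₂ h1F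
    · have key : ((1 / (K / Nv) : ℝ) : ℂ) • (1 : Matrix _ _ ℂ) - ptrans (contr ρ₂ F)
          = contr P (((1 / K : ℝ) : ℂ) • 1 - ptrans F)
            + contr Nm (ptrans F + ((1 / K : ℝ) : ℂ) • 1) := by
        rw [ptrans_contr, hdecomp, contr_sub_left, contr_sub_right, contr_add_right,
          contr_smul_right, contr_smul_right, contr_one, contr_one, hPtr, hNtr, hc₀]
        module
      rw [key]
      exact (contr_posSemidef hP h3F).add (contr_posSemidef hNm h4F)
    · have key : ptrans (contr ρ₂ F) + ((1 / (K / Nv) : ℝ) : ℂ) • (1 : Matrix _ _ ℂ)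
          = contr P (ptrans F + ((1 / K : ℝ) : ℂ) • 1)
            + contr Nm (((1 / K : ℝ) : ℂ) • 1 - ptrans F) := by
        rw [ptrans_contr, hdecomp, contr_sub_left, contr_sub_right, contr_add_right,
          contr_smul_right, contr_smul_right, contr_one, contr_one, hPtr, hNtr, hc₀]
        module
      rw [key]
      exact (contr_posSemidef hP h4F).add (contr_posSemidef hNm h3F)
    · rw [trace_contr_mul]
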